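/- Let X | W ~ N(0, ν/W) with W ~ χ²_ν (so X is Student's t with ν degrees of freedom), and let Y ~ N(0, σ²) with σ² > 0 be independent of (X, W). Then Z = X + Y is not Student's t with any degrees of freedom ν' > 0. -/

import Mathlib

open MeasureTheory ProbabilityTheory Real
open scoped NNReal

/-- The Student's `t` distribution with `ν` degrees of freedom (location 0, scale 1),
given by its density with respect to Lebesgue measure. -/
noncomputable def studentTMeasure (ν : ℝ) : Measure ℝ :=
  volume.withDensity fun x =>
    ENNReal.ofReal (Real.Gamma ((ν + 1) / 2) / (Real.sqrt (ν * Real.pi) * Real.Gamma (ν / 2)) *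
      (1 + x ^ 2 / ν) ^ (-((ν + 1) / 2)))

namespace StmtEightAux

open Set Filter intervalIntegral
open scoped ENNReal Topology

/-- normalizing constant of the Student `t` density -/
noncomputable def tC (θ : ℝ) : ℝ :=
  Real.Gamma ((θ + 1) / 2) / (Real.sqrt (θ * Real.pi) * Real.Gamma (θ / 2))

/-- the Student `t` density -/
noncomputable def tf (θ : ℝ) (x : ℝ) : ℝ := tC θ * (1 + x ^ 2 / θ) ^ (-((θ + 1) / 2))

variable {θ : ℝ}

lemma tC_pos (hθ : 0 < θ) : 0 < tC θ :=
  div_pos (Real.Gamma_pos_of_pos (by linarith))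
    (mul_pos (Real.sqrt_pos.2 (mul_pos hθ Real.pi_pos)) (Real.Gamma_pos_of_pos (by linarith)))

lemma base_pos (hθ : 0 < θ) (x : ℝ) : 0 < 1 + x ^ 2 / θ := by positivity

lemma tf_pos (hθ : 0 < θ) (x : ℝ) : 0 < tf θ x :=
  mul_pos (tC_pos hθ) (Real.rpow_pos_of_pos (base_pos hθ x) _)

lemma tf_cont (hθ : 0 < θ) : Continuous (tf θ) := by
  refine continuous_const.mul ?_
  refine Continuous.rpow_const ?_ fun x => Or.inl (base_pos hθ x).ne'
  fun_prop

lemma tf_even (x : ℝ) : tf θ (-x) = tf θ x := by simp [tf]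

lemma tf_strict_anti (hθ : 0 < θ) {a b : ℝ} (h : |a| < |b|) : tf θ b < tf θ a := by
  have h2 : a ^ 2 < b ^ 2 := by
    rw [← sq_abs a, ← sq_abs b]
    exact pow_lt_pow_left₀ h (abs_nonneg a) two_ne_zero
  refine mul_lt_mul_of_pos_left ?_ (tC_pos hθ)
  exact Real.rpow_lt_rpow_of_neg (base_pos hθ a) (by gcongr) (by linarith)

lemma tf_le_tC (hθ : 0 < θ) (x : ℝ) : tf θ x ≤ tC θ := by
  have : (1 + x ^ 2 / θ) ^ (-((θ + 1) / 2)) ≤ 1 :=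
    Real.rpow_le_one_of_one_le_of_nonpos (le_add_of_nonneg_right (by positivity)) (by linarith)
  calc tf θ x ≤ tC θ * 1 := mul_le_mul_of_nonneg_left this (tC_pos hθ).le
  _ = tC θ := mul_one _

lemma aux_rpow (hθ : 0 < θ) {c t : ℝ} (hc : 0 < c) (ht : 0 < t) :
    (t ^ 2 / c) ^ (-((θ + 1) / 2)) = c ^ ((θ + 1) / 2) * t ^ (-(θ + 1)) := by
  rw [div_eq_mul_inv, Real.mul_rpow (sq_nonneg t) (by positivity),
    ← Real.rpow_natCast t 2, ← Real.rpow_mul ht.le,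
    Real.inv_rpow hc.le, ← Real.rpow_neg hc.le, neg_neg]
  norm_num
  ring_nf

lemma tf_upper (hθ : 0 < θ) {t : ℝ} (ht : 0 < t) :
    tf θ t ≤ tC θ * θ ^ ((θ + 1) / 2) * t ^ (-(θ + 1)) := by
  have h1 : (1 + t ^ 2 / θ) ^ (-((θ + 1) / 2)) ≤ (t ^ 2 / θ) ^ (-((θ + 1) / 2)) :=
    Real.rpow_le_rpow_of_nonpos (by positivity) (le_add_of_nonneg_left zero_le_one) (by linarith)
  calc tf θ t ≤ tC θ * ((t ^ 2 / θ) ^ (-((θ + 1) / 2))) :=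
        mul_le_mul_of_nonneg_left h1 (tC_pos hθ).le
  _ = tC θ * θ ^ ((θ + 1) / 2) * t ^ (-(θ + 1)) := by
        rw [aux_rpow hθ hθ ht]; ring

lemma tf_lower (hθ : 0 < θ) {t : ℝ} (ht : Real.sqrt θ ≤ t) (ht0 : 0 < t) :
    tC θ * (θ / 2) ^ ((θ + 1) / 2) * t ^ (-(θ + 1)) ≤ tf θ t := by
  have hθt : θ ≤ t ^ 2 := by
    calc θ = Real.sqrt θ ^ 2 := (Real.sq_sqrt hθ.le).symm
    _ ≤ t ^ 2 := pow_le_pow_left₀ (Real.sqrt_nonneg θ) ht 2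
  have h1 : 1 ≤ t ^ 2 / θ := (one_le_div hθ).2 hθt
  have h2 : (1 + t ^ 2 / θ) ^ (-((θ + 1) / 2)) ≥ (t ^ 2 / (θ / 2)) ^ (-((θ + 1) / 2)) := by
    refine Real.rpow_le_rpow_of_nonpos (base_pos hθ t) ?_ (by linarith)
    rw [div_div_eq_mul_div]
    calc 1 + t ^ 2 / θ ≤ t ^ 2 / θ + t ^ 2 / θ := by linarith
    _ = t ^ 2 * 2 / θ := by ring
  calc tC θ * (θ / 2) ^ ((θ + 1) / 2) * t ^ (-(θ + 1))
      = tC θ * ((t ^ 2 / (θ / 2)) ^ (-((θ + 1) / 2))) := by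
        rw [aux_rpow hθ (by positivity) ht0]; ring
  _ ≤ tf θ t := mul_le_mul_of_nonneg_left h2 (tC_pos hθ).le

lemma studentT_apply (θ : ℝ) (s : Set ℝ) :
    studentTMeasure θ s = ∫⁻ x in s, ENNReal.ofReal (tf θ x) := by
  rw [studentTMeasure, withDensity_apply' _ s]; rfl

lemma tail_upper (hθ : 0 < θ) {x : ℝ} (hx : 0 < x) :
    studentTMeasure θ (Ioi x) ≤
      ENNReal.ofReal (tC θ * θ ^ ((θ + 1) / 2) * (x ^ (-θ) / θ)) := by
  have hint : IntegrableOn (fun t : ℝ => tC θ * θ ^ ((θ + 1) / 2) * t ^ (-(θ + 1))) (Ioi x) :=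
    (integrableOn_Ioi_rpow_of_lt (by linarith) hx).const_mul _
  rw [studentT_apply]
  calc ∫⁻ t in Ioi x, ENNReal.ofReal (tf θ t)
      ≤ ∫⁻ t in Ioi x, ENNReal.ofReal (tC θ * θ ^ ((θ + 1) / 2) * t ^ (-(θ + 1))) := by
        refine setLIntegral_mono' measurableSet_Ioi fun t ht => ?_
        exact ENNReal.ofReal_le_ofReal (tf_upper hθ (hx.trans ht))
  _ = ENNReal.ofReal (∫ t in Ioi x, tC θ * θ ^ ((θ + 1) / 2) * t ^ (-(θ + 1))) := by
        rw [ofReal_integral_eq_lintegral_ofReal hint]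
        filter_upwards [ae_restrict_mem measurableSet_Ioi] with t ht
        have h1 := hx.trans ht
        have h2 := tC_pos hθ
        positivity
  _ = ENNReal.ofReal (tC θ * θ ^ ((θ + 1) / 2) * (x ^ (-θ) / θ)) := by
        rw [MeasureTheory.integral_const_mul, integral_Ioi_rpow_of_lt (by linarith) hx]
        congr 1
        rw [show -(θ + 1) + 1 = -θ by ring]
        field_simp

lemma tail_lower (hθ : 0 < θ) {x : ℝ} (hx : 0 < x) (hx' : Real.sqrt θ ≤ x) :
    ENNReal.ofReal (tC θ * (θ / 2) ^ ((θ + 1) / 2) * (x ^ (-θ) / θ)) ≤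
      studentTMeasure θ (Ioi x) := by
  have hint : IntegrableOn (fun t : ℝ => tC θ * (θ / 2) ^ ((θ + 1) / 2) * t ^ (-(θ + 1)))
      (Ioi x) := (integrableOn_Ioi_rpow_of_lt (by linarith) hx).const_mul _
  rw [studentT_apply]
  calc ENNReal.ofReal (tC θ * (θ / 2) ^ ((θ + 1) / 2) * (x ^ (-θ) / θ))
      = ENNReal.ofReal (∫ t in Ioi x, tC θ * (θ / 2) ^ ((θ + 1) / 2) * t ^ (-(θ + 1))) := by
        rw [MeasureTheory.integral_const_mul, integral_Ioi_rpow_of_lt (by linarith) hx]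
        congr 1
        rw [show -(θ + 1) + 1 = -θ by ring]
        field_simp
  _ = ∫⁻ t in Ioi x, ENNReal.ofReal (tC θ * (θ / 2) ^ ((θ + 1) / 2) * t ^ (-(θ + 1))) := by
        rw [ofReal_integral_eq_lintegral_ofReal hint]
        filter_upwards [ae_restrict_mem measurableSet_Ioi] with t ht
        have h1 := hx.trans ht
        have h2 := tC_pos hθ
        positivity
  _ ≤ ∫⁻ t in Ioi x, ENNReal.ofReal (tf θ t) := by
        refine setLIntegral_mono' measurableSet_Ioi fun t ht => ?_
        exact ENNReal.ofReal_le_ofReal (tf_lower hθ (hx'.trans ht.le) (hx.trans ht))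

lemma gauss_tail {v : ℝ≥0} (hv : v ≠ 0) {x : ℝ} (hx : 2 * v ≤ x) (hx0 : 0 < x) :
    gaussianReal 0 v (Ioi x) ≤
      ENNReal.ofReal ((Real.sqrt (2 * Real.pi * v))⁻¹ * Real.exp (-x)) := by
  rw [gaussianReal_apply_eq_integral 0 hv]
  refine ENNReal.ofReal_le_ofReal ?_
  have hv0 : (0:ℝ) < v := by positivity
  calc ∫ t in Ioi x, gaussianPDFReal 0 v t
      ≤ ∫ t in Ioi x, (Real.sqrt (2 * Real.pi * v))⁻¹ * Real.exp (-1 * t) := by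
        refine setIntegral_mono_on (integrable_gaussianPDFReal 0 v).restrict
          (((exp_neg_integrableOn_Ioi x one_pos)).const_mul _) measurableSet_Ioi
          fun t ht => ?_
        rw [gaussianPDFReal]
        refine mul_le_mul_of_nonneg_left ?_ (by positivity)
        rw [neg_one_mul, Real.exp_le_exp]
        have htx : 2 * (v:ℝ) ≤ t := hx.trans (le_of_lt ht)
        have ht0 : 0 < t := hx0.trans ht
        rw [sub_zero, neg_div, neg_le_neg_iff, le_div_iff₀ (by positivity)]
        nlinarith
  _ = (Real.sqrt (2 * Real.pi * v))⁻¹ * Real.exp (-x) := by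
        rw [MeasureTheory.integral_const_mul]
        congr 1
        simp only [neg_one_mul]
        exact integral_exp_neg_Ioi x

lemma gauss_Ioi_pos {v : ℝ≥0} (hv : v ≠ 0) : 0 < gaussianReal 0 v (Ioi (-1 : ℝ)) := by
  rw [pos_iff_ne_zero]
  intro h0
  have := (gaussianReal_absolutelyContinuous' 0 hv) h0
  rw [Real.volume_Ioi] at this
  simp at this

lemma gauss_singleton {v : ℝ≥0} (hv : v ≠ 0) : gaussianReal 0 v {(0:ℝ)} = 0 :=
  (gaussianReal_absolutelyContinuous 0 hv) (volume_singleton)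

lemma studentT_Icc (hθ : 0 < θ) {a b : ℝ} (hab : a ≤ b) :
    studentTMeasure θ (Icc a b) = ENNReal.ofReal (∫ t in a..b, tf θ t) := by
  rw [studentT_apply, intervalIntegral.integral_of_le hab, ← integral_Icc_eq_integral_Ioc,
    ofReal_integral_eq_lintegral_ofReal ((tf_cont hθ).integrableOn_Icc)
      (ae_of_all _ fun t => (tf_pos hθ t).le)]

lemma studentT_Icc_bound (hθ : 0 < θ) (a b : ℝ) :
    studentTMeasure θ (Icc a b) ≤ ENNReal.ofReal (tC θ) * ENNReal.ofReal (b - a) := by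
  rw [studentT_apply]
  calc ∫⁻ t in Icc a b, ENNReal.ofReal (tf θ t)
      ≤ ∫⁻ _ in Icc a b, ENNReal.ofReal (tC θ) :=
        setLIntegral_mono' measurableSet_Icc fun t _ =>
          ENNReal.ofReal_le_ofReal (tf_le_tC hθ t)
  _ = ENNReal.ofReal (tC θ) * volume (Icc a b) := setLIntegral_const _ _
  _ = ENNReal.ofReal (tC θ) * ENNReal.ofReal (b - a) := by rw [Real.volume_Icc]

/-- the key strict "Anderson" inequality for a shifted window -/
lemma anderson (hθ : 0 < θ) {y : ℝ} (hy : 0 < y) :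
    ∫ t in (-1 - y)..(1 - y), tf θ t < ∫ t in (-1 : ℝ)..1, tf θ t := by
  have hii : ∀ a b : ℝ, IntervalIntegrable (tf θ) volume a b :=
    fun a b => (tf_cont hθ).intervalIntegrable a b
  have h1 : (∫ t in (-1 - y)..(1 - y), tf θ t) + ∫ t in (1 - y)..(1:ℝ), tf θ t
      = ∫ t in (-1 - y)..(1:ℝ), tf θ t :=
    integral_add_adjacent_intervals (hii _ _) (hii _ _)
  have h2 : (∫ t in (-1 - y)..(-1 : ℝ), tf θ t) + ∫ t in (-1 : ℝ)..1, tf θ t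
      = ∫ t in (-1 - y)..(1:ℝ), tf θ t :=
    integral_add_adjacent_intervals (hii _ _) (hii _ _)
  have h3 : (∫ t in (-1 - y)..(-1 : ℝ), tf θ t) = ∫ t in (1:ℝ)..(1 + y), tf θ t := by
    have := intervalIntegral.integral_comp_neg (a := (1:ℝ)) (b := 1 + y) (fun t => tf θ t)
    simp only [tf_even] at this
    rw [show (-1 - y : ℝ) = -(1 + y) by ring, show (-1 : ℝ) = -(1:ℝ) from rfl, ← this]
  have h4 : (∫ t in (1:ℝ)..(1 + y), tf θ t) = ∫ t in (1 - y)..(1:ℝ), tf θ (2 - t) := by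
    rw [intervalIntegral.integral_comp_sub_left (fun t => tf θ t) 2]
    congr 1 <;> ring
  have h5 : (∫ t in (1 - y)..(1:ℝ), tf θ t) - ∫ t in (1 - y)..(1:ℝ), tf θ (2 - t)
      = ∫ t in (1 - y)..(1:ℝ), (tf θ t - tf θ (2 - t)) :=
    (intervalIntegral.integral_sub (hii _ _)
      (((tf_cont hθ).comp (continuous_const.sub continuous_id)).intervalIntegrable _ _)).symm
  have h6 : 0 < ∫ t in (1 - y)..(1:ℝ), (tf θ t - tf θ (2 - t)) := by
    refine intervalIntegral_pos_of_pos_on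
      ((((tf_cont hθ)).sub ((tf_cont hθ).comp
        (continuous_const.sub continuous_id))).intervalIntegrable _ _) ?_ (by linarith)
    intro t ht
    rw [sub_pos]
    refine tf_strict_anti hθ ?_
    have ht1 : t < 1 := ht.2
    rw [abs_of_pos (by linarith : (0:ℝ) < 2 - t)]
    rcases le_or_gt 0 t with h | h
    · rw [abs_of_nonneg h]; linarith
    · rw [abs_of_neg h]; linarith
  linarith [h1, h2, h3, h4, h5, h6]

lemma anderson' (hθ : 0 < θ) {y : ℝ} (hy : y ≠ 0) :
    studentTMeasure θ (Icc (-1 - y) (1 - y)) < studentTMeasure θ (Icc (-1 : ℝ) 1) := by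
  have hQpos : 0 < ∫ t in (-1:ℝ)..1, tf θ t :=
    intervalIntegral_pos_of_pos_on ((tf_cont hθ).intervalIntegrable _ _)
      (fun t _ => tf_pos hθ t) (by norm_num)
  have key : ∀ z : ℝ, 0 < z → studentTMeasure θ (Icc (-1 - z) (1 - z)) <
      studentTMeasure θ (Icc (-1 : ℝ) 1) := by
    intro z hz
    rw [studentT_Icc hθ (by linarith), studentT_Icc hθ (by norm_num)]
    exact (ENNReal.ofReal_lt_ofReal_iff hQpos).2 (anderson hθ hz)
  rcases hy.lt_or_gt with h | h
  · have hrefl : studentTMeasure θ (Icc (-1 - y) (1 - y)) =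
        studentTMeasure θ (Icc (-1 - (-y)) (1 - (-y))) := by
      rw [studentT_Icc hθ (by linarith), studentT_Icc hθ (by linarith)]
      congr 1
      have := intervalIntegral.integral_comp_neg (a := (-1 - -y)) (b := (1 - -y))
        (fun t => tf θ t)
      simp only [tf_even] at this
      rw [show (-1 - y : ℝ) = -(1 - -y) by ring, show (1 - y : ℝ) = -(-1 - -y) by ring, ← this]
    rw [hrefl]
    exact key (-y) (by linarith)
  · exact key y h

end StmtEightAux

open StmtEightAux Set Filter
open scoped ENNReal Topology

/-- Let `X` be Student's `t` with `ν > 0` degrees of freedom (i.e. `X | W ~ N(0, ν/W)` with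
`W ~ χ²_ν`), and let `Y ~ N(0, v)` with `v > 0` be independent of `X`. Then `Z = X + Y` is
not Student's `t` with any degrees of freedom `ν' > 0`. -/
theorem stmt_8 {Ω : Type*} [MeasurableSpace Ω] (μ : Measure Ω) [IsProbabilityMeasure μ]
    (X Y : Ω → ℝ) (hMX : Measurable X) (hMY : Measurable Y)
    (hindep : IndepFun X Y μ)
    (ν : ℝ) (hν : 0 < ν) (v : ℝ≥0) (hv : 0 < v)
    (hX : μ.map X = studentTMeasure ν)
    (hY : μ.map Y = gaussianReal 0 v) :
    ∀ ν' : ℝ, 0 < ν' → μ.map (fun ω => X ω + Y ω) ≠ studentTMeasure ν' := by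
  intro ν' hν' h
  have hvne : v ≠ 0 := hv.ne'
  have hMZ : Measurable fun ω => X ω + Y ω := hMX.add hMY
  have hmapZ : ∀ s : Set ℝ, MeasurableSet s →
      μ ((fun ω => X ω + Y ω) ⁻¹' s) = studentTMeasure ν' s := fun s hs => by
    rw [← Measure.map_apply hMZ hs, h]
  have hmapX : ∀ s : Set ℝ, MeasurableSet s → μ (X ⁻¹' s) = studentTMeasure ν s :=
    fun s hs => by rw [← Measure.map_apply hMX hs, hX]
  have hmapY : ∀ s : Set ℝ, MeasurableSet s → μ (Y ⁻¹' s) = gaussianReal 0 v s :=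
    fun s hs => by rw [← Measure.map_apply hMY hs, hY]
  rcases lt_trichotomy ν ν' with hgt | heq | hlt
  · -- case ν < ν' : lower bound on tail of Z contradicts fast decay of t_{ν'} tail
    set c : ℝ≥0∞ := gaussianReal 0 v (Ioi (-1 : ℝ)) with hc
    have hc0 : 0 < c := gauss_Ioi_pos hvne
    have hct : c ≠ ⊤ := (measure_lt_top _ _).ne
    set cR : ℝ := c.toReal with hcR
    have hcR0 : 0 < cR := ENNReal.toReal_pos hc0.ne' hct
    set A : ℝ := tC ν * (ν / 2) ^ ((ν + 1) / 2) with hA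
    set B : ℝ := tC ν' * ν' ^ ((ν' + 1) / 2) with hB
    have hApos : 0 < A := by have := tC_pos hν; positivity
    have hBpos : 0 < B := by have := tC_pos hν'; positivity
    set K : ℝ := A * 2 ^ (-ν) * cR / ν with hK
    have hKpos : 0 < K := by positivity
    obtain ⟨x, hx1, hxs, hxp⟩ : ∃ x : ℝ, 1 ≤ x ∧ Real.sqrt ν ≤ x ∧
        B / ν' / K < x ^ (ν' - ν) := by
      have hev : ∀ᶠ x : ℝ in atTop, B / ν' / K < x ^ (ν' - ν) :=
        (tendsto_rpow_atTop (by linarith)).eventually_gt_atTop _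
      rcases ((eventually_ge_atTop (1:ℝ)).and ((eventually_ge_atTop (Real.sqrt ν)).and
        hev)).exists with ⟨x, h1, h2, h3⟩
      exact ⟨x, h1, h2, h3⟩
    have hx0 : (0:ℝ) < x := lt_of_lt_of_le one_pos hx1
    have hsub : X ⁻¹' (Ioi (x + 1)) ∩ Y ⁻¹' (Ioi (-1)) ⊆
        (fun ω => X ω + Y ω) ⁻¹' (Ioi x) := by
      rintro ω ⟨h1, h2⟩
      simp only [mem_preimage, mem_Ioi] at *
      linarith
    have hmul : μ (X ⁻¹' (Ioi (x + 1)) ∩ Y ⁻¹' (Ioi (-1 : ℝ))) =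
        studentTMeasure ν (Ioi (x + 1)) * c := by
      rw [hindep.measure_inter_preimage_eq_mul _ _ measurableSet_Ioi measurableSet_Ioi,
        hmapX _ measurableSet_Ioi, hmapY _ measurableSet_Ioi]
    have hchain : ENNReal.ofReal (A * ((x + 1) ^ (-ν) / ν)) * c ≤
        ENNReal.ofReal (B * (x ^ (-ν') / ν')) := by
      calc ENNReal.ofReal (A * ((x + 1) ^ (-ν) / ν)) * c
          ≤ studentTMeasure ν (Ioi (x + 1)) * c := by
            refine mul_le_mul_left ?_ _
            exact tail_lower hν (by linarith : (0:ℝ) < x + 1) (by linarith)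
      _ = μ (X ⁻¹' (Ioi (x + 1)) ∩ Y ⁻¹' (Ioi (-1 : ℝ))) := hmul.symm
      _ ≤ μ ((fun ω => X ω + Y ω) ⁻¹' (Ioi x)) := measure_mono hsub
      _ = studentTMeasure ν' (Ioi x) := hmapZ _ measurableSet_Ioi
      _ ≤ ENNReal.ofReal (B * (x ^ (-ν') / ν')) := by
            exact tail_upper hν' hx0
    have hreal : A * ((x + 1) ^ (-ν) / ν) * cR ≤ B * (x ^ (-ν') / ν') := by
      rw [show c = ENNReal.ofReal cR by rw [hcR, ENNReal.ofReal_toReal hct],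
        ← ENNReal.ofReal_mul (by positivity)] at hchain
      exact (ENNReal.ofReal_le_ofReal_iff (by positivity)).1 hchain
    have h2x : (2:ℝ) ^ (-ν) * x ^ (-ν) ≤ (x + 1) ^ (-ν) := by
      rw [← Real.mul_rpow (by norm_num) hx0.le]
      exact Real.rpow_le_rpow_of_nonpos (by linarith) (by linarith) (by linarith)
    have hfin : K * x ^ (ν' - ν) ≤ B / ν' := by
      have e1 : K * x ^ (ν' - ν) = A * (2 ^ (-ν) * x ^ (-ν) / ν) * cR * x ^ ν' := by
        rw [show (ν' - ν : ℝ) = -ν + ν' by ring, Real.rpow_add hx0, hK]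
        ring
      have e2 : B * (x ^ (-ν') / ν') * x ^ ν' = B / ν' := by
        have h1 : x ^ (-ν') * x ^ ν' = 1 := by
          rw [← Real.rpow_add hx0]; simp
        calc B * (x ^ (-ν') / ν') * x ^ ν' = B / ν' * (x ^ (-ν') * x ^ ν') := by ring
        _ = B / ν' := by rw [h1, mul_one]
      rw [e1, ← e2]
      have hmono : A * (2 ^ (-ν) * x ^ (-ν) / ν) * cR ≤ A * ((x + 1) ^ (-ν) / ν) * cR := by
        gcongr
      have := mul_le_mul_of_nonneg_right (hmono.trans hreal)
        (Real.rpow_nonneg hx0.le ν')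
      exact this
    have : B / ν' / K < B / ν' / K := by
      calc B / ν' / K < x ^ (ν' - ν) := hxp
      _ ≤ B / ν' / K := by
          rw [le_div_iff₀ hKpos]
          linarith [hfin]
    exact absurd this (lt_irrefl _)
  · -- case ν' = ν : strict Anderson inequality at the window [-1, 1]
    subst heq
    haveI hPX : IsProbabilityMeasure (studentTMeasure ν) :=
      hX ▸ Measure.isProbabilityMeasure_map hMX.aemeasurable
    have hprod : μ.map (fun ω => (X ω, Y ω)) =
        (studentTMeasure ν).prod (gaussianReal 0 v) := by
      rw [← hX, ← hY]
      exact (indepFun_iff_map_prod_eq_prod_map_map hMX.aemeasurable hMY.aemeasurable).mp hindep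
    have hsm : MeasurableSet {p : ℝ × ℝ | p.1 + p.2 ∈ Icc (-1 : ℝ) 1} :=
      (measurable_fst.add measurable_snd) measurableSet_Icc
    have hZI : studentTMeasure ν (Icc (-1 : ℝ) 1) =
        ∫⁻ y, studentTMeasure ν (Icc (-1 - y) (1 - y)) ∂(gaussianReal 0 v) := by
      calc studentTMeasure ν (Icc (-1 : ℝ) 1)
          = μ ((fun ω => X ω + Y ω) ⁻¹' (Icc (-1 : ℝ) 1)) :=
            (hmapZ _ measurableSet_Icc).symm
      _ = μ ((fun ω => (X ω, Y ω)) ⁻¹' {p : ℝ × ℝ | p.1 + p.2 ∈ Icc (-1 : ℝ) 1}) := rfl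
      _ = μ.map (fun ω => (X ω, Y ω)) {p : ℝ × ℝ | p.1 + p.2 ∈ Icc (-1 : ℝ) 1} :=
            (Measure.map_apply (hMX.prodMk hMY) hsm).symm
      _ = (studentTMeasure ν).prod (gaussianReal 0 v)
            {p : ℝ × ℝ | p.1 + p.2 ∈ Icc (-1 : ℝ) 1} := by rw [hprod]
      _ = ∫⁻ y, studentTMeasure ν ((fun x => (x, y)) ⁻¹'
            {p : ℝ × ℝ | p.1 + p.2 ∈ Icc (-1 : ℝ) 1}) ∂(gaussianReal 0 v) :=
            Measure.prod_apply_symm hsm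
      _ = ∫⁻ y, studentTMeasure ν (Icc (-1 - y) (1 - y)) ∂(gaussianReal 0 v) := by
            congr 1
            funext y
            congr 1
            ext t
            simp only [mem_preimage, mem_setOf_eq, mem_Icc]
            constructor
            · rintro ⟨h1, h2⟩; constructor <;> linarith
            · rintro ⟨h1, h2⟩; constructor <;> linarith
    have hstrict : (∫⁻ y, studentTMeasure ν (Icc (-1 - y) (1 - y)) ∂(gaussianReal 0 v)) <
        ∫⁻ _, studentTMeasure ν (Icc (-1 : ℝ) 1) ∂(gaussianReal 0 v) := by
      refine lintegral_strict_mono ?_ aemeasurable_const ?_ ?_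
      · exact (IsProbabilityMeasure.ne_zero _)
      · refine ne_top_of_le_ne_top ?_ (lintegral_mono
          (fun y => (studentT_Icc_bound hν (-1 - y) (1 - y)).trans
            (le_of_eq (by rw [show (1 - y : ℝ) - (-1 - y) = 2 by ring]))))
        rw [lintegral_const]
        exact ENNReal.mul_ne_top (ENNReal.mul_ne_top ENNReal.ofReal_ne_top
          ENNReal.ofReal_ne_top) (measure_ne_top _ _)
      · have hsubset : {y : ℝ | ¬ studentTMeasure ν (Icc (-1 - y) (1 - y)) <
            studentTMeasure ν (Icc (-1 : ℝ) 1)} ⊆ {(0:ℝ)} := by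
          intro y hy
          by_contra hy0
          exact hy (anderson' hν (fun h0 => hy0 (by simp [h0])))
        exact measure_mono_null hsubset (gauss_singleton hvne)
    rw [← hZI, lintegral_const, measure_univ, mul_one] at hstrict
    exact absurd hstrict (lt_irrefl _)
  · -- case ν' < ν : upper bound on the tail of Z contradicts heavy tail of t_{ν'}
    set A : ℝ := tC ν' * (ν' / 2) ^ ((ν' + 1) / 2) with hA
    set B : ℝ := tC ν * ν ^ ((ν + 1) / 2) with hB
    set K : ℝ := (Real.sqrt (2 * Real.pi * v))⁻¹ with hKdef
    have hApos : 0 < A := by have := tC_pos hν'; positivity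
    have hBpos : 0 < B := by have := tC_pos hν; positivity
    have hKpos : 0 < K := by
      have : (0:ℝ) < v := by positivity
      rw [hKdef]
      positivity
    set g : ℝ → ℝ := fun x => (B / ν) * 2 ^ ν * x ^ (ν' - ν) +
      K * (x ^ ν' * Real.exp (-(1/2) * x)) with hg
    have htend : Tendsto g atTop (𝓝 0) := by
      have t1 : Tendsto (fun x : ℝ => (B / ν) * 2 ^ ν * x ^ (ν' - ν)) atTop (𝓝 0) := by
        have := (tendsto_rpow_neg_atTop (by linarith : 0 < ν - ν')).const_mul ((B / ν) * 2 ^ ν)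
        rw [mul_zero] at this
        refine this.congr fun x => ?_
        rw [show -(ν - ν') = ν' - ν by ring]
      have t2 : Tendsto (fun x : ℝ => K * (x ^ ν' * Real.exp (-(1/2) * x))) atTop (𝓝 0) := by
        have := (tendsto_rpow_mul_exp_neg_mul_atTop_nhds_zero ν' (1/2) (by norm_num)).const_mul K
        rw [mul_zero] at this
        exact this
      have := t1.add t2
      rw [add_zero] at this
      exact this
    have hev : ∀ᶠ x : ℝ in atTop, A / ν' ≤ g x := by
      filter_upwards [eventually_ge_atTop (1:ℝ), eventually_ge_atTop (Real.sqrt ν'),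
        eventually_ge_atTop (2:ℝ), eventually_ge_atTop (4 * (v:ℝ))] with x hx1 hxs hx2 hxv
      have hx0 : (0:ℝ) < x := lt_of_lt_of_le one_pos hx1
      have hx20 : (0:ℝ) < x / 2 := by linarith
      -- measure inequality
      have hsub : (fun ω => X ω + Y ω) ⁻¹' (Ioi x) ⊆
          X ⁻¹' (Ioi (x / 2)) ∪ Y ⁻¹' (Ioi (x / 2)) := by
        intro ω hω
        simp only [mem_preimage, mem_Ioi, mem_union] at *
        by_contra hcon
        push_neg at hcon
        linarith [hcon.1, hcon.2]
      have hmeas : studentTMeasure ν' (Ioi x) ≤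
          studentTMeasure ν (Ioi (x / 2)) + gaussianReal 0 v (Ioi (x / 2)) := by
        rw [← hmapZ _ measurableSet_Ioi, ← hmapX _ measurableSet_Ioi,
          ← hmapY _ measurableSet_Ioi]
        exact (measure_mono hsub).trans (measure_union_le _ _)
      have hlow : ENNReal.ofReal (A * ((x : ℝ) ^ (-ν') / ν')) ≤ studentTMeasure ν' (Ioi x) := by
        exact tail_lower hν' hx0 hxs
      have hup1 : studentTMeasure ν (Ioi (x / 2)) ≤
          ENNReal.ofReal (B * ((x / 2) ^ (-ν) / ν)) := by
        exact tail_upper hν hx20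
      have hup2 : gaussianReal 0 v (Ioi (x / 2)) ≤
          ENNReal.ofReal (K * Real.exp (-(x / 2))) := by
        have := gauss_tail hvne (by linarith : 2 * (v:ℝ) ≤ x / 2) hx20
        rwa [hKdef]
      have hcomb : ENNReal.ofReal (A * (x ^ (-ν') / ν')) ≤
          ENNReal.ofReal (B * ((x / 2) ^ (-ν) / ν) + K * Real.exp (-(x / 2))) := by
        calc ENNReal.ofReal (A * (x ^ (-ν') / ν')) ≤ studentTMeasure ν' (Ioi x) := hlow
        _ ≤ studentTMeasure ν (Ioi (x / 2)) + gaussianReal 0 v (Ioi (x / 2)) := hmeas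
        _ ≤ ENNReal.ofReal (B * ((x / 2) ^ (-ν) / ν)) +
              ENNReal.ofReal (K * Real.exp (-(x / 2))) := add_le_add hup1 hup2
        _ = ENNReal.ofReal (B * ((x / 2) ^ (-ν) / ν) + K * Real.exp (-(x / 2))) :=
              (ENNReal.ofReal_add (by positivity) (by positivity)).symm
      have hrr : A * (x ^ (-ν') / ν') ≤ B * ((x / 2) ^ (-ν) / ν) + K * Real.exp (-(x / 2)) :=
        (ENNReal.ofReal_le_ofReal_iff (by positivity)).1 hcomb
      -- multiply by x ^ ν'
      have hxinv : x ^ (-ν') * x ^ ν' = 1 := by rw [← Real.rpow_add hx0]; simp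
      have hhalf : (x / 2 : ℝ) ^ (-ν) = x ^ (-ν) * 2 ^ ν := by
        rw [div_eq_mul_inv, Real.mul_rpow hx0.le (by norm_num),
          ← Real.rpow_neg_one 2, ← Real.rpow_mul (by norm_num)]
        congr 1
        ring
      have hmul := mul_le_mul_of_nonneg_right hrr (Real.rpow_nonneg hx0.le ν')
      have elhs : A * (x ^ (-ν') / ν') * x ^ ν' = A / ν' := by
        calc A * (x ^ (-ν') / ν') * x ^ ν' = A / ν' * (x ^ (-ν') * x ^ ν') := by ring
        _ = A / ν' := by rw [hxinv, mul_one]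
      have erhs : (B * ((x / 2) ^ (-ν) / ν) + K * Real.exp (-(x / 2))) * x ^ ν' = g x := by
        rw [hhalf, hg]
        have hxsub : x ^ (-ν) * x ^ ν' = x ^ (ν' - ν) := by
          rw [← Real.rpow_add hx0]; congr 1; ring
        have hexp : Real.exp (-(x / 2)) = Real.exp (-(1/2) * x) := by congr 1; ring
        rw [hexp]
        calc (B * (x ^ (-ν) * 2 ^ ν / ν) + K * Real.exp (-(1/2) * x)) * x ^ ν'
            = B / ν * 2 ^ ν * (x ^ (-ν) * x ^ ν') +
              K * (x ^ ν' * Real.exp (-(1/2) * x)) := by ring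
        _ = B / ν * 2 ^ ν * x ^ (ν' - ν) + K * (x ^ ν' * Real.exp (-(1/2) * x)) := by
              rw [hxsub]
      rw [elhs, erhs] at hmul
      exact hmul
    have hfinal : A / ν' ≤ 0 := ge_of_tendsto htend hev
    have : 0 < A / ν' := by positivity
    linarith
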